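/- For m ≥ 1, let Φ_m : V_m → ℝ be the unique function such that Φ_m(x_j) = 0 for every bottom-row point x_j (j = 0,…,2^m), Φ_m(q₀) = 1, and for every z ∈ V_m not in the bottom row and different from q₀, Φ_m(z) equals the average of the values of Φ_m over the ∼_m-neighbors of z. Then the level-m graph normal derivative at q₀, namely b_m := (5/3)^m (2·Φ_m(q₀) − Σ_{y ∼_m q₀} Φ_m(y)), equals 14·10^m/(3^m + 6·10^m), and c_m := Φ_m((q₀+q₁)/2) = Φ_m((q₀+q₂)/2) = (5·3^m + 9·10^m)/(5·3^m + 30·10^m). -/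

import Mathlib

open scoped BigOperators

noncomputable section

namespace SGPaper

/-- The three corners of the Sierpinski gasket:
`q₀ = (1/2, √3/2)`, `q₁ = (0,0)`, `q₂ = (1,0)`. -/
def q : Fin 3 → ℝ × ℝ
  | 0 => (1 / 2, Real.sqrt 3 / 2)
  | 1 => (0, 0)
  | 2 => (1, 0)

/-- The contraction map towards corner `i`: `F_i(x) = (x + q_i)/2`. -/
def Fmap (i : Fin 3) (x : ℝ × ℝ) : ℝ × ℝ := (2⁻¹ : ℝ) • (x + q i)

/-- `Fword w = F_{w₁} ∘ ⋯ ∘ F_{w_m}` for the word `w = w₁⋯w_m`. -/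
def Fword (w : List (Fin 3)) : ℝ × ℝ → ℝ × ℝ :=
  w.foldr (fun i f => Fmap i ∘ f) id

/-- The level-`m` vertex set of the Sierpinski gasket:
`V_m = ⋃_{|w| = m} F_w({q₀, q₁, q₂})`. -/
def V (m : ℕ) : Set (ℝ × ℝ) :=
  {x | ∃ w : List (Fin 3), w.length = m ∧ ∃ i : Fin 3, x = Fword w (q i)}

/-- `x` and `y` are `m`-neighbors: they are distinct and belong to a common
level-`m` cell `F_w({q₀, q₁, q₂})`. -/
def Nbr (m : ℕ) (x y : ℝ × ℝ) : Prop :=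
  x ≠ y ∧ ∃ w : List (Fin 3), w.length = m ∧
    (∃ i : Fin 3, x = Fword w (q i)) ∧ (∃ j : Fin 3, y = Fword w (q j))

/-- The value `(u x - u y)²` on the unordered pair `{x, y}`. -/
def edgeVal (u : ℝ × ℝ → ℝ) : Sym2 (ℝ × ℝ) → ℝ :=
  Sym2.lift ⟨fun x y => (u x - u y) ^ 2, fun _ _ => by ring⟩

/-- The unordered pair `e` is an edge of the level-`m` graph `Γ_m`. -/
def IsEdge (m : ℕ) (e : Sym2 (ℝ × ℝ)) : Prop :=
  ∃ x y : ℝ × ℝ, Nbr m x y ∧ e = s(x, y)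

/-- The level-`m` graph energy: `E_m(u) = (5/3)^m Σ (u x − u y)²`, the sum being over
unordered `m`-neighbor pairs `{x, y}` (a finite set, so `tsum` is the honest sum). -/
def Energy (m : ℕ) (u : ℝ × ℝ → ℝ) : ℝ :=
  (5 / 3 : ℝ) ^ m * ∑' e : {e : Sym2 (ℝ × ℝ) // IsEdge m e}, edgeVal u e

/-- `Q_E(v)`: minimal level-`m` energy among functions `u : V_m → ℝ` agreeing
with `v` on `E` (the minimum is attained, so it equals this infimum). -/
def Q (m : ℕ) (E : Set (ℝ × ℝ)) (v : ℝ × ℝ → ℝ) : ℝ :=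
  sInf {r | ∃ u : ℝ × ℝ → ℝ, (∀ x ∈ E, u x = v x) ∧ r = Energy m u}

/-- Indicator function of the point `z`. -/
def ind (z : ℝ × ℝ) : ℝ × ℝ → ℝ := fun t => if t = z then 1 else 0

/-- The conductance `c^E_{x,y} = (Q_E(𝟙_x) + Q_E(𝟙_y) − Q_E(𝟙_x + 𝟙_y))/2`
between `x, y ∈ E`, computed at level `m`. -/
def cond (m : ℕ) (E : Set (ℝ × ℝ)) (x y : ℝ × ℝ) : ℝ :=
  (Q m E (ind x) + Q m E (ind y) - Q m E (ind x + ind y)) / 2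

/-- The `j`-th bottom-row point of `V_n`: `x_j = q₁ + (j/2ⁿ)(q₂ − q₁)`. -/
def xb (n j : ℕ) : ℝ × ℝ := q 1 + ((j : ℝ) / 2 ^ n) • (q 2 - q 1)

/-- The bottom row `Ẽ_n = {x₀, …, x_{2ⁿ}}` of `V_n`. -/
def Ebot (n : ℕ) : Set (ℝ × ℝ) := {p | ∃ j ≤ 2 ^ n, p = xb n j}

/-- The bottom row together with the top point: `E_n⁺ = {q₀, x₀, …, x_{2ⁿ}}`. -/
def Eplus (n : ℕ) : Set (ℝ × ℝ) := insert (q 0) (Ebot n)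

/-- The sum of the values of `u` over the `∼_m`-neighbors of `z`. -/
def nbrSum (m : ℕ) (u : ℝ × ℝ → ℝ) (z : ℝ × ℝ) : ℝ :=
  ∑' y : {y : ℝ × ℝ // Nbr m z y}, u y

/-! ### Integer barycentric codes for addresses -/

/-- basis vector `E3 i` -/
def E3 : Fin 3 → Fin 3 → ℕ := fun i c => if c = i then 1 else 0

/-- the integer code of an address `(w, i)`:
`code w i = Σ_k 2^(|w|-1-k) E3 (w k) + E3 i`. -/
def code : List (Fin 3) → Fin 3 → Fin 3 → ℕ
  | [], i => E3 i
  | a :: w, i => fun c => 2 ^ w.length * E3 a c + code w i c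

@[simp] lemma code_nil (i : Fin 3) : code [] i = E3 i := rfl

lemma code_cons (a : Fin 3) (w : List (Fin 3)) (i : Fin 3) :
    code (a :: w) i = fun c => 2 ^ w.length * E3 a c + code w i c := rfl

lemma E3_sum (i : Fin 3) : E3 i 0 + E3 i 1 + E3 i 2 = 1 := by
  fin_cases i <;> simp [E3]

lemma fin3cases (c : Fin 3) : c = 0 ∨ c = 1 ∨ c = 2 := by
  fin_cases c <;> simp

lemma code_sum (w : List (Fin 3)) (i : Fin 3) :
    code w i 0 + code w i 1 + code w i 2 = 2 ^ w.length := by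
  induction w with
  | nil => simpa using E3_sum i
  | cons a w ih =>
      simp only [code_cons, List.length_cons, pow_succ]
      fin_cases a <;> simp [E3] <;> omega

lemma code_le (w : List (Fin 3)) (i c : Fin 3) : code w i c ≤ 2 ^ w.length := by
  have h := code_sum w i
  rcases fin3cases c with rfl | rfl | rfl <;> omega

/-- the point with code `ν` at level `m`. -/
noncomputable def pt (m : ℕ) (ν : Fin 3 → ℕ) : ℝ × ℝ :=
  (((ν 2 : ℝ) + (ν 0 : ℝ) / 2) / 2 ^ m, (ν 0 : ℝ) * (Real.sqrt 3 / 2) / 2 ^ m)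

lemma Fword_nil (x : ℝ × ℝ) : Fword [] x = x := rfl

lemma Fword_cons (a : Fin 3) (w : List (Fin 3)) (x : ℝ × ℝ) :
    Fword (a :: w) x = Fmap a (Fword w x) := rfl

lemma Fword_append (u v : List (Fin 3)) (x : ℝ × ℝ) :
    Fword (u ++ v) x = Fword u (Fword v x) := by
  induction u with
  | nil => rfl
  | cons a u ih => simp [Fword_cons, ih]

lemma Fmap_fst (i : Fin 3) (x : ℝ × ℝ) : (Fmap i x).1 = (x.1 + (q i).1) / 2 := by
  simp [Fmap, Prod.smul_def, Prod.fst_add]; ring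

lemma Fmap_snd (i : Fin 3) (x : ℝ × ℝ) : (Fmap i x).2 = (x.2 + (q i).2) / 2 := by
  simp [Fmap, Prod.smul_def, Prod.snd_add]; ring

/-- main coordinate formula. -/
lemma Fword_eq_pt (w : List (Fin 3)) (i : Fin 3) :
    Fword w (q i) = pt w.length (code w i) := by
  induction w with
  | nil =>
      fin_cases i <;> simp [Fword_nil, pt, q, E3, Prod.ext_iff] <;> norm_num
  | cons a w ih =>
      rw [Fword_cons, ih]
      have h2 : (0:ℝ) < 2 ^ w.length := by positivity
      have h2' : (2:ℝ) ^ w.length ≠ 0 := ne_of_gt h2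
      apply Prod.ext
      · rw [Fmap_fst]
        simp only [pt, code_cons, List.length_cons, pow_succ]
        fin_cases a <;> simp [E3, q] <;> push_cast <;>
          rw [div_eq_div_iff (by positivity) (by positivity)] <;> field_simp <;> (try ring) <;> simp
      · rw [Fmap_snd]
        simp only [pt, code_cons, List.length_cons, pow_succ]
        fin_cases a <;> simp [E3, q] <;> push_cast <;>
          rw [div_eq_div_iff (by positivity) (by positivity)] <;> field_simp <;> (try ring) <;> simp

lemma sqrt3_pos : (0:ℝ) < Real.sqrt 3 := Real.sqrt_pos.mpr (by norm_num)

/-- injectivity of `pt` on codes with the correct total mass. -/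
lemma pt_inj {m : ℕ} {ν ν' : Fin 3 → ℕ}
    (hs : ν 0 + ν 1 + ν 2 = 2 ^ m) (hs' : ν' 0 + ν' 1 + ν' 2 = 2 ^ m)
    (h : pt m ν = pt m ν') : ν = ν' := by
  have h2 : (0:ℝ) < 2 ^ m := by positivity
  have hy := congrArg Prod.snd h
  have hx := congrArg Prod.fst h
  simp only [pt] at hy hx
  have key : ∀ x y : ℝ, x * (Real.sqrt 3 / 2) / 2 ^ m = y * (Real.sqrt 3 / 2) / 2 ^ m → x = y := by
    intro x y hxy
    have h1 : Real.sqrt 3 / 2 / 2 ^ m ≠ 0 := by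
      have := sqrt3_pos; positivity
    rw [mul_div_assoc, mul_div_assoc] at hxy
    exact mul_right_cancel₀ h1 hxy
  have h0 : ν 0 = ν' 0 := Nat.cast_injective (key _ _ hy)
  have hx2 := congrArg (fun r : ℝ => r * 2 ^ m) hx
  rw [div_mul_cancel₀ _ (ne_of_gt h2), div_mul_cancel₀ _ (ne_of_gt h2)] at hx2
  have h2n : ν 2 = ν' 2 := by
    have h0r : (ν 0 : ℝ) = (ν' 0 : ℝ) := by exact_mod_cast h0
    have : (ν 2 : ℝ) = (ν' 2 : ℝ) := by linarith
    exact_mod_cast this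
  have h1 : ν 1 = ν' 1 := by omega
  funext c
  rcases fin3cases c with rfl | rfl | rfl <;> assumption

lemma code_eq_of_pt_eq {w w' : List (Fin 3)} {i i' : Fin 3}
    (hl : w.length = w'.length) (h : Fword w (q i) = Fword w' (q i')) :
    code w i = code w' i' := by
  rw [Fword_eq_pt, Fword_eq_pt] at h
  rw [hl] at h
  exact pt_inj (by rw [← hl]; exact code_sum w i) (code_sum w' i') h

lemma pt_eq_of_code_eq {w w' : List (Fin 3)} {i i' : Fin 3}
    (hl : w.length = w'.length) (h : code w i = code w' i') :
    Fword w (q i) = Fword w' (q i') := by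
  rw [Fword_eq_pt, Fword_eq_pt, hl, h]

/-! ### Classification of addresses -/

lemma E3_self (i : Fin 3) : E3 i i = 1 := by simp [E3]

lemma E3_ne {i c : Fin 3} (h : c ≠ i) : E3 i c = 0 := by simp [E3, h]

/-- corner codes force the constant address. -/
lemma code_corner {w : List (Fin 3)} {i a : Fin 3}
    (h : code w i = fun c => 2 ^ w.length * E3 a c) :
    w = List.replicate w.length a ∧ i = a := by
  induction w with
  | nil =>
      refine ⟨by simp, ?_⟩
      have h' := congrFun h a
      simp only [code_nil, List.length_nil, pow_zero, one_mul, E3_self] at h'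
      by_contra hia
      rw [E3_ne (fun hh : a = i => hia hh.symm)] at h'
      omega
  | cons b w ih =>
      have hba : b = a := by
        by_contra hba
        have h' := congrFun h b
        simp only [code_cons, List.length_cons, pow_succ] at h'
        rw [E3_self, E3_ne hba] at h'
        simp only [mul_one, mul_zero] at h'
        have := code_le w i b
        have hpos : 0 < 2 ^ w.length := Nat.two_pow_pos _
        omega
      subst hba
      have hw : code w i = fun c => 2 ^ w.length * E3 b c := by
        funext c
        have h' := congrFun h c
        simp only [code_cons, List.length_cons, pow_succ] at h'
        have hrw : 2 ^ w.length * 2 * E3 b c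
            = 2 ^ w.length * E3 b c + 2 ^ w.length * E3 b c := by ring
        rw [hrw] at h'
        generalize ht : 2 ^ w.length * E3 b c = t at h' ⊢
        omega
      obtain ⟨hw1, hw2⟩ := ih hw
      constructor
      · simp [List.replicate, List.length_cons]
        exact hw1
      · exact hw2

lemma code_replicate (k : ℕ) (d j : Fin 3) :
    code (List.replicate k d) j = fun c => (2 ^ k - 1) * E3 d c + E3 j c := by
  induction k with
  | zero => simp
  | succ k ih =>
      funext c
      rw [List.replicate_succ]
      simp only [code_cons, List.length_replicate, ih]
      have h1 : (1:ℕ) ≤ 2 ^ k := Nat.one_le_two_pow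
      have h2 : (2:ℕ) ^ (k+1) = 2 ^ k * 2 := by ring
      rcases fin3cases c with rfl | rfl | rfl <;> fin_cases d <;> simp [E3] <;> omega

/-- the prefix lemma: an address of a point interior to the copy `u`
must start with `u`. -/
lemma code_prefix : ∀ (u : List (Fin 3)) {w : List (Fin 3)} {i : Fin 3}
    {v : List (Fin 3)} {j : Fin 3},
    w.length = u.length + v.length →
    code w i = code (u ++ v) j →
    (∀ a : Fin 3, code v j ≠ fun c => 2 ^ v.length * E3 a c) →
    ∃ w', w = u ++ w' ∧ w'.length = v.length ∧ code w' i = code v j := by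
  intro u
  induction u with
  | nil =>
      intro w i v j hl h hnc
      exact ⟨w, by simp, by simpa using hl, by simpa using h⟩
  | cons a u ih =>
      intro w i v j hl h hnc
      rcases w with _ | ⟨b, w'⟩
      · exfalso; simp only [List.length_nil, List.length_cons] at hl; omega
      have hl' : w'.length = u.length + v.length := by
        simp only [List.length_cons] at hl; omega
      have hlen : w'.length = (u ++ v).length := by simp [hl']
      by_cases hba : b = a
      · subst hba
        have h' : code w' i = code (u ++ v) j := by
          funext c
          have hc := congrFun h c
          simp only [code_cons, List.cons_append, List.length_append, hlen] at hc ⊢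
          omega
        obtain ⟨w'', hw1, hw2, hw3⟩ := ih hl' h' hnc
        exact ⟨w'', by rw [List.cons_append, hw1], hw2, hw3⟩
      · exfalso
        -- coordinate b forces code (u ++ v) j = 2^(length) E3 b
        have hcb := congrFun h b
        simp only [code_cons, List.cons_append, List.length_append,
          List.length_cons, hl'] at hcb
        rw [E3_self, E3_ne hba] at hcb
        have hble : code (u ++ v) j b ≤ 2 ^ (u.length + v.length) := by
          have := code_le (u ++ v) j b
          simpa [List.length_append] using this
        have hbfull : code (u ++ v) j b = 2 ^ (u.length + v.length) := by omega
        have hsum : code (u++v) j 0 + code (u++v) j 1 + code (u++v) j 2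
            = 2 ^ (u.length + v.length) := by
          have := code_sum (u ++ v) j
          simpa [List.length_append] using this
        have hfull : code (u ++ v) j = fun c => 2 ^ (u++v).length * E3 b c := by
          funext c
          simp only [List.length_append]
          rcases fin3cases b with rfl | rfl | rfl <;>
            rcases fin3cases c with rfl | rfl | rfl <;>
              simp [E3] at hbfull ⊢ <;> omega
        obtain ⟨hrep, hj⟩ := code_corner hfull
        -- then v is a replicate and code v j is a corner code
        have hv : v = List.replicate v.length b := by
          have : u ++ v = List.replicate u.length b ++ List.replicate v.length b := by
            rw [← List.replicate_add]
            simpa [List.length_append] using hrep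
          exact (List.append_inj this (by simp)).2
        apply hnc b
        rw [hv, hj, code_replicate]
        funext c
        have h1 : (1:ℕ) ≤ 2 ^ (List.replicate v.length b).length := Nat.one_le_two_pow
        simp only [List.length_replicate] at *
        rcases fin3cases c with rfl | rfl | rfl <;> fin_cases b <;> simp [E3] <;> omega

/-! ### Point-level lemmas -/

lemma Fmap_inj (a : Fin 3) : Function.Injective (Fmap a) := by
  intro x y h
  simp only [Fmap] at h
  have := congrArg (fun z : ℝ × ℝ => (2:ℝ) • z) h
  simp only [smul_smul] at this
  norm_num at this
  exact this

lemma Fword_inj (u : List (Fin 3)) : Function.Injective (Fword u) := by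
  induction u with
  | nil => intro x y h; exact h
  | cons a u ih =>
      intro x y h
      rw [Fword_cons, Fword_cons] at h
      exact ih (Fmap_inj a h)

lemma q_eq_pt (m : ℕ) (a : Fin 3) : q a = pt m (fun c => 2 ^ m * E3 a c) := by
  have h2 : (0:ℝ) < 2 ^ m := by positivity
  fin_cases a <;> simp [pt, q, E3, Prod.ext_iff] <;> push_cast <;> field_simp <;> ring

lemma Fmap_q_self (a : Fin 3) : Fmap a (q a) = q a := by
  simp only [Fmap]
  have : q a + q a = (2:ℝ) • q a := by
    rw [two_smul]
  rw [this, smul_smul]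
  norm_num

lemma Fword_replicate_self (k : ℕ) (a : Fin 3) :
    Fword (List.replicate k a) (q a) = q a := by
  induction k with
  | zero => rfl
  | succ k ih => rw [List.replicate_succ, Fword_cons, ih, Fmap_q_self]

/-- addresses of the corner `q a`. -/
lemma eq_q_iff {w : List (Fin 3)} {i a : Fin 3} :
    Fword w (q i) = q a ↔ code w i = fun c => 2 ^ w.length * E3 a c := by
  constructor
  · intro h
    have hq : q a = Fword (List.replicate w.length a) (q a) :=
      (Fword_replicate_self _ _).symm
    rw [hq] at h
    have := code_eq_of_pt_eq (by simp) h
    rw [this, code_replicate]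
    funext c
    have h1 : (1:ℕ) ≤ 2 ^ w.length := Nat.one_le_two_pow
    rcases fin3cases c with rfl | rfl | rfl <;> fin_cases a <;> simp [E3] <;> omega
  · intro h
    have hq : q a = Fword (List.replicate w.length a) (q a) :=
      (Fword_replicate_self _ _).symm
    rw [hq]
    apply pt_eq_of_code_eq (by simp)
    rw [h, code_replicate]
    funext c
    have h1 : (1:ℕ) ≤ 2 ^ w.length := Nat.one_le_two_pow
    rcases fin3cases c with rfl | rfl | rfl <;> fin_cases a <;> simp [E3] <;> omega

/-- the code of a replicate-corner address. -/
lemma code_replicate_corner (k : ℕ) (a : Fin 3) :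
    code (List.replicate k a) a = fun c => 2 ^ k * E3 a c := by
  rw [code_replicate]
  funext c
  have h1 : (1:ℕ) ≤ 2 ^ k := Nat.one_le_two_pow
  rcases fin3cases c with rfl | rfl | rfl <;> fin_cases a <;> simp [E3] <;> omega

/-- the bottom row point as a `pt`. -/
lemma xb_eq_pt (m j : ℕ) (hj : j ≤ 2 ^ m) :
    xb m j = pt m (fun c => if c = 1 then 2 ^ m - j else if c = 2 then j else 0) := by
  have h2 : (0:ℝ) < 2 ^ m := by positivity
  simp only [xb, q, pt]
  apply Prod.ext <;> simp [Prod.smul_def, Prod.ext_iff] <;> push_cast <;> field_simp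

/-- bottom row membership in terms of codes. -/
lemma bottom_iff {w : List (Fin 3)} {i : Fin 3} :
    (∃ j ≤ 2 ^ w.length, Fword w (q i) = xb w.length j) ↔ code w i 0 = 0 := by
  constructor
  · rintro ⟨j, hj, h⟩
    rw [Fword_eq_pt, xb_eq_pt _ _ hj] at h
    have := pt_inj (code_sum w i) ?_ h
    · have := congrFun this 0
      simpa using this
    · have : (0:Fin 3) ≠ 1 := by decide
      simp only [this, if_false]
      simp only [show ((0:Fin 3) = 1) = False by simp, show ((0:Fin 3) = 2) = False by simp,
        show ((1:Fin 3) = 1) = True by simp, show ((1:Fin 3) = 2) = False by simp,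
        show ((2:Fin 3) = 2) = True by simp, show ((2:Fin 3) = 1) = False by simp]
      simp
      omega
  · intro h0
    refine ⟨code w i 2, by have := code_le w i 2; exact this, ?_⟩
    rw [Fword_eq_pt, xb_eq_pt _ _ (code_le w i 2)]
    congr 1
    funext c
    have hs := code_sum w i
    rcases fin3cases c with rfl | rfl | rfl <;> simp <;> omega

/-- midpoint symmetry. -/
lemma Fmap_q_swap (a b : Fin 3) : Fmap a (q b) = Fmap b (q a) := by
  simp only [Fmap, add_comm]

lemma mid_eq_left (k : ℕ) (a b : Fin 3) :
    Fword [a] (q b) = Fword (a :: List.replicate k b) (q b) := by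
  rw [Fword_cons, Fword_cons, Fword_replicate_self, Fword_nil]

lemma mid_eq_right (k : ℕ) (a b : Fin 3) :
    Fword [a] (q b) = Fword (b :: List.replicate k a) (q a) := by
  rw [Fword_cons, Fword_cons, Fword_replicate_self, Fword_nil, Fmap_q_swap]

/-- the code of the midpoint address. -/
lemma code_mid (k : ℕ) (a b : Fin 3) (hab : a ≠ b) :
    code (a :: List.replicate k b) b = fun c => 2 ^ k * E3 a c + 2 ^ k * E3 b c := by
  rw [code_cons]
  funext c
  rw [List.length_replicate, code_replicate_corner]

/-! ### Neighbor sets -/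

lemma fin3_mem : ∀ (a b c j : Fin 3), a ≠ b → a ≠ c → b ≠ c →
    j = a ∨ j = b ∨ j = c := by decide

lemma pt_ne_of_code_ne {w w' : List (Fin 3)} {i i' : Fin 3}
    (hl : w.length = w'.length) (h : code w i ≠ code w' i') :
    Fword w (q i) ≠ Fword w' (q i') :=
  fun hh => h (code_eq_of_pt_eq hl hh)

/-- the two neighbors of a corner. -/
lemma nbr_corner {m : ℕ} {a b c : Fin 3} (hab : a ≠ b) (hac : a ≠ c) (hbc : b ≠ c) :
    ∀ y, Nbr m (q a) y ↔
      y = Fword (List.replicate m a) (q b) ∨ y = Fword (List.replicate m a) (q c) := by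
  have hqa : q a = Fword (List.replicate m a) (q a) := (Fword_replicate_self m a).symm
  have hby : code (List.replicate m a) a ≠ code (List.replicate m a) b := by
    intro hh
    have := congrFun hh b
    rw [code_replicate_corner, code_replicate] at this
    simp [E3_self, E3_ne (Ne.symm hab)] at this
  have hcy : code (List.replicate m a) a ≠ code (List.replicate m a) c := by
    intro hh
    have := congrFun hh c
    rw [code_replicate_corner, code_replicate] at this
    simp [E3_self, E3_ne (Ne.symm hac)] at this
  intro y
  constructor
  · rintro ⟨hne, w, hw, ⟨i, hi⟩, jj, hj⟩
    have hcode : code w i = fun c' => 2 ^ w.length * E3 a c' := eq_q_iff.mp hi.symm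
    obtain ⟨hrep, hia⟩ := code_corner hcode
    rw [hrep, hw] at hj
    rcases fin3_mem a b c jj hab hac hbc with h' | h' | h'
    · exfalso
      rw [h'] at hj
      exact hne ((hj.trans (Fword_replicate_self m a)).symm)
    · left; rw [h'] at hj; exact hj
    · right; rw [h'] at hj; exact hj
  · intro hy
    rcases hy with rfl | rfl
    · exact ⟨by rw [hqa]; exact pt_ne_of_code_ne rfl hby,
        List.replicate m a, by simp, ⟨a, hqa⟩, ⟨b, rfl⟩⟩
    · exact ⟨by rw [hqa]; exact pt_ne_of_code_ne rfl hcy,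
        List.replicate m a, by simp, ⟨a, hqa⟩, ⟨c, rfl⟩⟩

lemma E3_succ (b c : Fin 3) (k : ℕ) : (2 ^ k - 1) * E3 b c + E3 b c = 2 ^ k * E3 b c := by
  have h1 : (1:ℕ) ≤ 2 ^ k := Nat.one_le_two_pow
  have h : E3 b c = 0 ∨ E3 b c = 1 := by unfold E3; split <;> simp
  rcases h with h | h <;> rw [h] <;> omega

/-- codes of relevant midpoint-cell vertices, as explicit functions. -/
lemma code_mid_cell (k : ℕ) (a b j : Fin 3) :
    code (a :: List.replicate k b) j
      = fun c => 2 ^ k * E3 a c + ((2 ^ k - 1) * E3 b c + E3 j c) := by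
  funext c
  rw [code_cons, List.length_replicate, code_replicate]

/-- classification of cells containing the midpoint `F_a(q_b)`. -/
lemma mid_cells {k : ℕ} {a b : Fin 3} (hab : a ≠ b)
    {w : List (Fin 3)} {i : Fin 3} (hw : w.length = k + 1)
    (h : Fword w (q i) = Fword [a] (q b)) :
    (w = a :: List.replicate k b ∧ i = b) ∨ (w = b :: List.replicate k a ∧ i = a) := by
  have hz : Fword [a] (q b) = Fword (a :: List.replicate k b) (q b) := mid_eq_left k a b
  rw [hz] at h
  have hcode : code w i = code (a :: List.replicate k b) b := by
    apply code_eq_of_pt_eq _ h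
    simp [hw]
  rw [code_mid_cell] at hcode
  have hcode' : code w i = fun c => 2 ^ k * E3 a c + 2 ^ k * E3 b c := by
    rw [hcode]
    funext c
    rw [E3_succ]
  rcases w with _ | ⟨d, w'⟩
  · exfalso; simp at hw
  have hl' : w'.length = k := by simpa using hw
  have hda : d = a ∨ d = b := by
    by_contra hd
    push_neg at hd
    have hthis := congrFun hcode' d
    rw [code_cons] at hthis
    simp only [hl', E3_self, E3_ne hd.1, E3_ne hd.2, mul_one, mul_zero, add_zero,
      zero_add] at hthis
    have := Nat.two_pow_pos k
    omega
  rcases hda with rfl | rfl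
  · left
    have hrest : code w' i = fun c => 2 ^ w'.length * E3 b c := by
      funext c
      have hthis := congrFun hcode' c
      simp only [code_cons, hl'] at hthis
      rw [hl']
      exact Nat.add_left_cancel hthis
    obtain ⟨hrep, rfl⟩ := code_corner hrest
    rw [hl'] at hrep
    exact ⟨by rw [← hrep], rfl⟩
  · right
    have hrest : code w' i = fun c => 2 ^ w'.length * E3 a c := by
      funext c
      have hthis := congrFun hcode' c
      simp only [code_cons, hl'] at hthis
      rw [add_comm (2 ^ k * E3 a c) (2 ^ k * E3 d c)] at hthis
      rw [hl']
      exact Nat.add_left_cancel hthis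
    obtain ⟨hrep, rfl⟩ := code_corner hrest
    rw [hl'] at hrep
    exact ⟨by rw [← hrep], rfl⟩

/-- evaluation helper for midpoint-cell codes. -/
lemma code_mid_cell_eval (k : ℕ) (a b j c : Fin 3) :
    code (a :: List.replicate k b) j c
      = 2 ^ k * E3 a c + (2 ^ k - 1) * E3 b c + E3 j c := by
  rw [code_mid_cell]; ring

/-- the four neighbors of the midpoint `F_a(q_b)` (with `c` the third letter). -/
lemma nbr_mid {k : ℕ} {a b c : Fin 3} (hab : a ≠ b) (hac : a ≠ c) (hbc : b ≠ c) :
    ∀ y, Nbr (k+1) (Fword [a] (q b)) y ↔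
      y = Fword (a :: List.replicate k b) (q a) ∨
      y = Fword (a :: List.replicate k b) (q c) ∨
      y = Fword (b :: List.replicate k a) (q b) ∨
      y = Fword (b :: List.replicate k a) (q c) := by
  have h1 : (1:ℕ) ≤ 2 ^ k := Nat.one_le_two_pow
  have hzl : Fword [a] (q b) = Fword (a :: List.replicate k b) (q b) := mid_eq_left k a b
  have hzr : Fword [a] (q b) = Fword (b :: List.replicate k a) (q a) := mid_eq_right k a b
  have hne1 : Fword [a] (q b) ≠ Fword (a :: List.replicate k b) (q a) := by
    rw [hzl]; apply pt_ne_of_code_ne rfl; intro hh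
    have := congrFun hh a
    simp only [code_mid_cell_eval, E3_self, E3_ne hab, E3_ne hac, E3_ne hbc,
      E3_ne (Ne.symm hab), E3_ne (Ne.symm hac), E3_ne (Ne.symm hbc),
      mul_one, mul_zero, add_zero, zero_add] at this
    omega
  have hne2 : Fword [a] (q b) ≠ Fword (a :: List.replicate k b) (q c) := by
    rw [hzl]; apply pt_ne_of_code_ne rfl; intro hh
    have := congrFun hh c
    simp only [code_mid_cell_eval, E3_self, E3_ne hab, E3_ne hac, E3_ne hbc,
      E3_ne (Ne.symm hab), E3_ne (Ne.symm hac), E3_ne (Ne.symm hbc),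
      mul_one, mul_zero, add_zero, zero_add] at this
    omega
  have hne3 : Fword [a] (q b) ≠ Fword (b :: List.replicate k a) (q b) := by
    rw [hzr]; apply pt_ne_of_code_ne rfl; intro hh
    have := congrFun hh b
    simp only [code_mid_cell_eval, E3_self, E3_ne hab, E3_ne hac, E3_ne hbc,
      E3_ne (Ne.symm hab), E3_ne (Ne.symm hac), E3_ne (Ne.symm hbc),
      mul_one, mul_zero, add_zero, zero_add] at this
    omega
  have hne4 : Fword [a] (q b) ≠ Fword (b :: List.replicate k a) (q c) := by
    rw [hzr]; apply pt_ne_of_code_ne rfl; intro hh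
    have := congrFun hh c
    simp only [code_mid_cell_eval, E3_self, E3_ne hab, E3_ne hac, E3_ne hbc,
      E3_ne (Ne.symm hab), E3_ne (Ne.symm hac), E3_ne (Ne.symm hbc),
      mul_one, mul_zero, add_zero, zero_add] at this
    omega
  intro y
  constructor
  · rintro ⟨hne, w, hw, ⟨i, hi⟩, jj, hj⟩
    rcases mid_cells hab hw hi.symm with ⟨hwe, hib⟩ | ⟨hwe, hib⟩
    · subst hwe
      rcases fin3_mem b a c jj (Ne.symm hab) hbc hac with h' | h' | h'
      · exfalso; rw [h'] at hj; rw [hj, ← hzl] at hne; exact hne rfl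
      · left; rw [h'] at hj; exact hj
      · right; left; rw [h'] at hj; exact hj
    · subst hwe
      rcases fin3_mem a b c jj hab hac hbc with h' | h' | h'
      · exfalso; rw [h'] at hj; rw [hj, ← hzr] at hne; exact hne rfl
      · right; right; left; rw [h'] at hj; exact hj
      · right; right; right; rw [h'] at hj; exact hj
  · intro hy
    rcases hy with rfl | rfl | rfl | rfl
    · exact ⟨hne1, a :: List.replicate k b, by simp, ⟨b, hzl⟩, ⟨a, rfl⟩⟩
    · exact ⟨hne2, a :: List.replicate k b, by simp, ⟨b, hzl⟩, ⟨c, rfl⟩⟩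
    · exact ⟨hne3, b :: List.replicate k a, by simp, ⟨a, hzr⟩, ⟨b, rfl⟩⟩
    · exact ⟨hne4, b :: List.replicate k a, by simp, ⟨a, hzr⟩, ⟨c, rfl⟩⟩

/-- pairwise distinctness of the four midpoint neighbors. -/
lemma mid_nbrs_distinct {k : ℕ} {a b c : Fin 3} (hab : a ≠ b) (hac : a ≠ c) (hbc : b ≠ c) :
    Fword (a :: List.replicate k b) (q a) ≠ Fword (a :: List.replicate k b) (q c) ∧
    Fword (a :: List.replicate k b) (q a) ≠ Fword (b :: List.replicate k a) (q b) ∧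
    Fword (a :: List.replicate k b) (q a) ≠ Fword (b :: List.replicate k a) (q c) ∧
    Fword (a :: List.replicate k b) (q c) ≠ Fword (b :: List.replicate k a) (q b) ∧
    Fword (a :: List.replicate k b) (q c) ≠ Fword (b :: List.replicate k a) (q c) ∧
    Fword (b :: List.replicate k a) (q b) ≠ Fword (b :: List.replicate k a) (q c) := by
  have h1 : (1:ℕ) ≤ 2 ^ k := Nat.one_le_two_pow
  refine ⟨?_, ?_, ?_, ?_, ?_, ?_⟩ <;> apply pt_ne_of_code_ne (by simp) <;> intro hh
  · have := congrFun hh c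
    simp only [code_mid_cell_eval, E3_self, E3_ne hab, E3_ne hac, E3_ne hbc,
      E3_ne (Ne.symm hab), E3_ne (Ne.symm hac), E3_ne (Ne.symm hbc),
      mul_one, mul_zero, add_zero, zero_add] at this
    omega
  · have := congrFun hh a
    simp only [code_mid_cell_eval, E3_self, E3_ne hab, E3_ne hac, E3_ne hbc,
      E3_ne (Ne.symm hab), E3_ne (Ne.symm hac), E3_ne (Ne.symm hbc),
      mul_one, mul_zero, add_zero, zero_add] at this
    omega
  · have := congrFun hh a
    simp only [code_mid_cell_eval, E3_self, E3_ne hab, E3_ne hac, E3_ne hbc,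
      E3_ne (Ne.symm hab), E3_ne (Ne.symm hac), E3_ne (Ne.symm hbc),
      mul_one, mul_zero, add_zero, zero_add] at this
    omega
  · have := congrFun hh c
    simp only [code_mid_cell_eval, E3_self, E3_ne hab, E3_ne hac, E3_ne hbc,
      E3_ne (Ne.symm hab), E3_ne (Ne.symm hac), E3_ne (Ne.symm hbc),
      mul_one, mul_zero, add_zero, zero_add] at this
    omega
  · have := congrFun hh a
    simp only [code_mid_cell_eval, E3_self, E3_ne hab, E3_ne hac, E3_ne hbc,
      E3_ne (Ne.symm hab), E3_ne (Ne.symm hac), E3_ne (Ne.symm hbc),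
      mul_one, mul_zero, add_zero, zero_add] at this
    omega
  · have := congrFun hh c
    simp only [code_mid_cell_eval, E3_self, E3_ne hab, E3_ne hac, E3_ne hbc,
      E3_ne (Ne.symm hab), E3_ne (Ne.symm hac), E3_ne (Ne.symm hbc),
      mul_one, mul_zero, add_zero, zero_add] at this
    omega

/-! ### Evaluating neighbor sums -/

/-- graph-harmonicity at `z`. -/
def Harm (m : ℕ) (Φ : ℝ × ℝ → ℝ) (z : ℝ × ℝ) : Prop :=
  Φ z = nbrSum m Φ z / (Nat.card {y : ℝ × ℝ // Nbr m z y} : ℝ)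

def setEquiv {α : Type*} {p : α → Prop} (S : Finset α) (h : ∀ y, p y ↔ y ∈ S) :
    {y // p y} ≃ {y // y ∈ S} :=
  ⟨fun y => ⟨y.val, (h _).mp y.2⟩, fun y => ⟨y.val, (h _).mpr y.2⟩,
    fun y => rfl, fun y => rfl⟩

lemma nbrSum_eq_sum {m : ℕ} {z : ℝ × ℝ} (S : Finset (ℝ × ℝ))
    (h : ∀ y, Nbr m z y ↔ y ∈ S) (u : ℝ × ℝ → ℝ) :
    nbrSum m u z = ∑ y ∈ S, u y := by
  unfold nbrSum
  calc ∑' y : {y // Nbr m z y}, u y.val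
      = ∑' y : {y // Nbr m z y}, (fun s : {y // y ∈ S} => u s.val) ((setEquiv S h) y) :=
        tsum_congr (fun y => rfl)
    _ = ∑' s : {y // y ∈ S}, u s.val :=
        (setEquiv S h).tsum_eq (fun s : {y // y ∈ S} => u s.val)
    _ = ∑ y ∈ S, u y := Finset.tsum_subtype S u

lemma nbrCard_eq {m : ℕ} {z : ℝ × ℝ} (S : Finset (ℝ × ℝ))
    (h : ∀ y, Nbr m z y ↔ y ∈ S) :
    Nat.card {y : ℝ × ℝ // Nbr m z y} = S.card := by
  rw [Nat.card_congr (setEquiv S h), Nat.card_eq_fintype_card, Fintype.card_coe]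

/-- two-neighbor vertices: the harmonic equation. -/
lemma harm_two {m : ℕ} {z y1 y2 : ℝ × ℝ} {Φ : ℝ × ℝ → ℝ}
    (h : ∀ y, Nbr m z y ↔ y = y1 ∨ y = y2) (h12 : y1 ≠ y2) :
    nbrSum m Φ z = Φ y1 + Φ y2 ∧ Nat.card {y : ℝ × ℝ // Nbr m z y} = 2 := by
  have hS : ∀ y, Nbr m z y ↔ y ∈ ({y1, y2} : Finset (ℝ × ℝ)) := by
    intro y; rw [h y]; simp
  constructor
  · rw [nbrSum_eq_sum _ hS, Finset.sum_pair h12]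
  · rw [nbrCard_eq _ hS, Finset.card_pair h12]

/-- four-neighbor vertices: the harmonic equation. -/
lemma harm_four {m : ℕ} {z y1 y2 y3 y4 : ℝ × ℝ} {Φ : ℝ × ℝ → ℝ}
    (h : ∀ y, Nbr m z y ↔ y = y1 ∨ y = y2 ∨ y = y3 ∨ y = y4)
    (h12 : y1 ≠ y2) (h13 : y1 ≠ y3) (h14 : y1 ≠ y4)
    (h23 : y2 ≠ y3) (h24 : y2 ≠ y4) (h34 : y3 ≠ y4) :
    nbrSum m Φ z = Φ y1 + Φ y2 + Φ y3 + Φ y4 ∧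
      Nat.card {y : ℝ × ℝ // Nbr m z y} = 4 := by
  have hS : ∀ y, Nbr m z y ↔ y ∈ ({y1, y2, y3, y4} : Finset (ℝ × ℝ)) := by
    intro y; rw [h y]; simp
  constructor
  · rw [nbrSum_eq_sum _ hS]
    rw [Finset.sum_insert (by simp [h12, h13, h14]),
      Finset.sum_insert (by simp [h23, h24]), Finset.sum_pair h34]
    ring
  · rw [nbrCard_eq _ hS]
    rw [Finset.card_insert_of_notMem (by simp [h12, h13, h14]),
      Finset.card_insert_of_notMem (by simp [h23, h24]), Finset.card_pair h34]

/-! ### Copy transfer -/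

lemma nbr_copy {u v : List (Fin 3)} {j : Fin 3} {m : ℕ}
    (hm : m = u.length + v.length)
    (hnc : ∀ a : Fin 3, code v j ≠ fun c => 2 ^ v.length * E3 a c) :
    ∀ y, Nbr m (Fword u (Fword v (q j))) y ↔
      ∃ y', Nbr v.length (Fword v (q j)) y' ∧ y = Fword u y' := by
  intro y
  constructor
  · rintro ⟨hne, w, hw, ⟨i, hi⟩, jj, hj⟩
    rw [← Fword_append] at hi
    have hcode : code w i = code (u ++ v) j := by
      apply code_eq_of_pt_eq _ hi.symm
      rw [hw, hm]; simp
    obtain ⟨w'', hw1, hw2, hw3⟩ := code_prefix u (by rw [hw, hm]) hcode hnc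
    have hz' : Fword w'' (q i) = Fword v (q j) := pt_eq_of_code_eq hw2 hw3
    refine ⟨Fword w'' (q jj), ⟨?_, w'', hw2, ⟨i, hz'.symm⟩, ⟨jj, rfl⟩⟩, ?_⟩
    · intro hcon
      exact hne (by rw [hj, hw1, Fword_append, ← hcon])
    · rw [hj, hw1, Fword_append]
  · rintro ⟨y', ⟨hne', w'', hw'', ⟨i, hi⟩, jj, hjj⟩, rfl⟩
    refine ⟨fun hcon => hne' (Fword_inj u hcon), u ++ w'', by simp [hw'', hm],
      ⟨i, ?_⟩, ⟨jj, by rw [hjj, Fword_append]⟩⟩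
    rw [Fword_append, hi]

noncomputable def copy_equiv {u v : List (Fin 3)} {j : Fin 3} {m : ℕ}
    (hm : m = u.length + v.length)
    (hnc : ∀ a : Fin 3, code v j ≠ fun c => 2 ^ v.length * E3 a c) :
    {y' // Nbr v.length (Fword v (q j)) y'} ≃
      {y // Nbr m (Fword u (Fword v (q j))) y} := by
  apply Equiv.ofBijective
    (fun y' => (⟨Fword u y'.val, (nbr_copy hm hnc _).mpr ⟨y'.val, y'.2, rfl⟩⟩ :
      {y // Nbr m (Fword u (Fword v (q j))) y}))
  constructor
  · intro x y hxy
    apply Subtype.ext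
    exact Fword_inj u (congrArg Subtype.val hxy)
  · rintro ⟨y, hy⟩
    obtain ⟨y', hy', rfl⟩ := (nbr_copy hm hnc _).mp hy
    exact ⟨⟨y', hy'⟩, rfl⟩

lemma nbrSum_copy {u v : List (Fin 3)} {j : Fin 3} {m : ℕ}
    (hm : m = u.length + v.length)
    (hnc : ∀ a : Fin 3, code v j ≠ fun c => 2 ^ v.length * E3 a c)
    (Φ : ℝ × ℝ → ℝ) :
    nbrSum m Φ (Fword u (Fword v (q j)))
      = nbrSum v.length (fun x => Φ (Fword u x)) (Fword v (q j)) := by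
  unfold nbrSum
  rw [← (copy_equiv hm hnc).tsum_eq (fun y => Φ y.val)]
  rfl

lemma nbrCard_copy {u v : List (Fin 3)} {j : Fin 3} {m : ℕ}
    (hm : m = u.length + v.length)
    (hnc : ∀ a : Fin 3, code v j ≠ fun c => 2 ^ v.length * E3 a c) :
    Nat.card {y : ℝ × ℝ // Nbr m (Fword u (Fword v (q j))) y}
      = Nat.card {y : ℝ × ℝ // Nbr v.length (Fword v (q j)) y} :=
  (Nat.card_congr (copy_equiv hm hnc)).symm

lemma Harm_copy {u v : List (Fin 3)} {j : Fin 3} {m : ℕ}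
    (hm : m = u.length + v.length)
    (hnc : ∀ a : Fin 3, code v j ≠ fun c => 2 ^ v.length * E3 a c)
    {Φ : ℝ × ℝ → ℝ} (h : Harm m Φ (Fword u (Fword v (q j)))) :
    Harm v.length (fun x => Φ (Fword u x)) (Fword v (q j)) := by
  unfold Harm at h ⊢
  rw [← nbrSum_copy hm hnc, ← nbrCard_copy hm hnc]
  exact h

/-! ### Harmonicity hypotheses and transfers -/

/-- `g` is harmonic at every non-corner vertex of the level-`k` graph. -/
def HarmAll (k : ℕ) (g : ℝ × ℝ → ℝ) : Prop :=
  ∀ (v : List (Fin 3)) (j : Fin 3), v.length = k →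
    (∀ a : Fin 3, code v j ≠ fun c => 2 ^ k * E3 a c) → Harm k g (Fword v (q j))

lemma noncorner_cons {v : List (Fin 3)} {j : Fin 3}
    (hnc : ∀ a : Fin 3, code v j ≠ fun c => 2 ^ v.length * E3 a c) (d : Fin 3) :
    ∀ a : Fin 3, code (d :: v) j ≠ fun c => 2 ^ (d :: v).length * E3 a c := by
  intro a h
  by_cases had : a = d
  · subst had
    apply hnc a
    funext c
    have hc := congrFun h c
    simp only [code_cons, List.length_cons, pow_succ] at hc
    have hrw : 2 ^ v.length * 2 * E3 a c
        = 2 ^ v.length * E3 a c + 2 ^ v.length * E3 a c := by ring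
    rw [hrw] at hc
    generalize 2 ^ v.length * E3 a c = t at hc ⊢
    omega
  · have hc := congrFun h d
    simp only [code_cons, List.length_cons, E3_self,
      E3_ne (fun hh : d = a => had hh.symm), mul_one, mul_zero] at hc
    have := Nat.two_pow_pos v.length
    have hle := code_le v j d
    omega

lemma harmAll_copy {k : ℕ} {g : ℝ × ℝ → ℝ} (hg : HarmAll (k+1) g) (d : Fin 3) :
    HarmAll k (fun x => g (Fmap d x)) := by
  intro v j hv hnc
  subst hv
  have hnc' := noncorner_cons hnc d
  have hglob := hg (d :: v) j (by simp) (by simpa using hnc')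
  have := Harm_copy (u := [d]) (v := v) (m := v.length + 1) (by simp; omega) hnc
    (by rw [Fword_cons] at hglob; exact hglob)
  exact this

/-- non-equality of two addresses in a common replicate cell. -/
lemma rep_nbrs_ne (k : ℕ) {d a c : Fin 3} (had : a ≠ d) (hcd : c ≠ d) (hac : a ≠ c) :
    Fword (List.replicate k d) (q a) ≠ Fword (List.replicate k d) (q c) := by
  apply pt_ne_of_code_ne rfl
  intro hh
  have := congrFun hh a
  rw [code_replicate, code_replicate] at this
  simp only [E3_self, E3_ne had, E3_ne hcd, E3_ne hac, E3_ne (Ne.symm had),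
    E3_ne (Ne.symm hcd), E3_ne (Ne.symm hac), mul_zero, zero_add, add_zero] at this
  generalize (2 ^ k - 1) * E3 d a = t at this
  omega

/-- the midpoint cell address is non-corner. -/
lemma nc_mid {k : ℕ} {a b : Fin 3} (hab : a ≠ b) :
    ∀ a' : Fin 3, code (a :: List.replicate k b) b ≠ fun c => 2 ^ (k+1) * E3 a' c := by
  intro a' h
  have h1 := Nat.two_pow_pos k
  by_cases ha' : a' = a
  · subst ha'
    have hc := congrFun h b
    simp only [code_mid_cell_eval, E3_self, E3_ne hab, E3_ne (Ne.symm hab),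
      mul_one, mul_zero, add_zero, zero_add] at hc
    omega
  · have hc := congrFun h a
    simp only [code_mid_cell_eval, E3_self, E3_ne hab, E3_ne (Ne.symm hab),
      E3_ne (fun hh : a = a' => ha' hh.symm), mul_one, mul_zero, add_zero,
      zero_add] at hc
    omega

/-- the sum over the two neighbors of a corner, at level `k`, for any function. -/
lemma corner_sum (k : ℕ) {a b c : Fin 3} (hab : a ≠ b) (hac : a ≠ c) (hbc : b ≠ c)
    (Φ : ℝ × ℝ → ℝ) :
    nbrSum k Φ (q a) = Φ (Fword (List.replicate k a) (q b))
        + Φ (Fword (List.replicate k a) (q c)) ∧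
      Nat.card {y : ℝ × ℝ // Nbr k (q a) y} = 2 :=
  harm_two (nbr_corner hab hac hbc) (rep_nbrs_ne k (Ne.symm hab) (Ne.symm hac) hbc)

/-- the harmonic identity at a midpoint: `4 Φ(z) = ` sum of the four neighbors. -/
lemma mid_harm {k : ℕ} {a b c : Fin 3} (hab : a ≠ b) (hac : a ≠ c) (hbc : b ≠ c)
    {Φ : ℝ × ℝ → ℝ} (hg : HarmAll (k+1) Φ) :
    4 * Φ (Fword [a] (q b)) =
      Φ (Fword (a :: List.replicate k b) (q a)) +
      Φ (Fword (a :: List.replicate k b) (q c)) +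
      Φ (Fword (b :: List.replicate k a) (q b)) +
      Φ (Fword (b :: List.replicate k a) (q c)) := by
  obtain ⟨d1, d2, d3, d4, d5, d6⟩ := mid_nbrs_distinct (k := k) hab hac hbc
  obtain ⟨hsum, hcard⟩ := harm_four (nbr_mid hab hac hbc) d1 d2 d3 d4 d5 d6 (Φ := Φ)
  have hH : Harm (k+1) Φ (Fword [a] (q b)) := by
    have := hg (a :: List.replicate k b) b (by simp) (nc_mid hab)
    rwa [← mid_eq_left] at this
  unfold Harm at hH
  rw [hsum, hcard] at hH
  rw [hH]
  push_cast
  ring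

/-- **Flux renormalization.** If `g` is harmonic at every non-corner vertex of the
level-`k` graph, the flux at a corner is `(3/5)^k` times the level-0 flux. -/
lemma lemA : ∀ (k : ℕ) (g : ℝ × ℝ → ℝ), HarmAll k g →
    ∀ a b c : Fin 3, a ≠ b → a ≠ c → b ≠ c →
    2 * g (q a) - nbrSum k g (q a)
      = (3/5 : ℝ) ^ k * (2 * g (q a) - g (q b) - g (q c)) := by
  intro k
  induction k with
  | zero =>
      intro g hg a b c hab hac hbc
      have hs := (corner_sum 0 hab hac hbc g).1
      simp only [List.replicate_zero, Fword_nil] at hs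
      rw [hs, pow_zero]
      ring
  | succ k ih =>
      intro g hg a b c hab hac hbc
      have t0 : (0:ℝ) < (3/5:ℝ) ^ k := by positivity
      have key : ∀ x y z' : Fin 3, x ≠ y → x ≠ z' → y ≠ z' →
          4 * g (Fmap x (q y))
            = g (q x) + g (q y) + g (Fmap x (q z')) + g (Fmap y (q z')) := by
        intro x y z' hxy hxz hyz
        have T1 := ih (fun t => g (Fmap x t)) (harmAll_copy hg x) y x z'
          (Ne.symm hxy) hyz hxz
        have S1 := (corner_sum k (Ne.symm hxy) hyz hxz (fun t => g (Fmap x t))).1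
        have T2 := ih (fun t => g (Fmap y t)) (harmAll_copy hg y) x y z' hxy hxz hyz
        have S2 := (corner_sum k hxy hxz hyz (fun t => g (Fmap y t))).1
        have H4 := mid_harm hxy hxz hyz hg
        simp only [Fword_cons, Fword_nil] at H4
        rw [Fmap_q_self] at T1
        rw [Fmap_q_self, Fmap_q_swap y x] at T2
        have hcomb : (3/5:ℝ) ^ k * (4 * g (Fmap x (q y)) - g (q x) - g (q y)
            - g (Fmap x (q z')) - g (Fmap y (q z'))) = 0 := by
          linear_combination H4 - S1 - S2 - T1 - T2
        rcases mul_eq_zero.mp hcomb with h | h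
        · exact absurd h (ne_of_gt t0)
        · linarith
      have e1 := key a b c hab hac hbc
      have e2 := key a c b hac hab (Ne.symm hbc)
      rw [Fmap_q_swap c b] at e2
      have e3 := key b c a hbc (Ne.symm hab) (Ne.symm hac)
      rw [Fmap_q_swap b a, Fmap_q_swap c a] at e3
      have hsum := (corner_sum (k+1) hab hac hbc g).1
      rw [List.replicate_succ] at hsum
      simp only [Fword_cons] at hsum
      have TA := ih (fun t => g (Fmap a t)) (harmAll_copy hg a) a b c hab hac hbc
      have SA := (corner_sum k hab hac hbc (fun t => g (Fmap a t))).1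
      rw [Fmap_q_self] at TA
      rw [hsum, pow_succ]
      linear_combination TA + SA - (2*(3/5:ℝ)^k/5) * e1 - (2*(3/5:ℝ)^k/5) * e2
        - ((3/5:ℝ)^k/5) * e3

/-! ### Bottom-row helpers and the constants -/

lemma xb_coord (n j : ℕ) : xb n j = ((j : ℝ) / 2 ^ n, 0) := by
  simp [xb, q, Prod.smul_def, Prod.ext_iff]

lemma xb_zero (n : ℕ) : xb n 0 = q 1 := by
  rw [xb_coord]; simp [q]

lemma xb_full (n : ℕ) : xb n (2 ^ n) = q 2 := by
  rw [xb_coord]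
  have : (0:ℝ) < 2 ^ n := by positivity
  simp only [q]
  rw [Prod.ext_iff]
  constructor
  · push_cast; field_simp
  · rfl

lemma Fmap1_xb (k j : ℕ) : Fmap 1 (xb k j) = xb (k+1) j := by
  rw [xb_coord, xb_coord]
  apply Prod.ext
  · rw [Fmap_fst]
    simp only [q]
    push_cast
    rw [pow_succ]
    field_simp
    ring
  · rw [Fmap_snd]
    simp [q]

lemma Fmap2_xb (k j : ℕ) : Fmap 2 (xb k j) = xb (k+1) (j + 2 ^ k) := by
  rw [xb_coord, xb_coord]
  apply Prod.ext
  · rw [Fmap_fst]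
    simp only [q]
    have h2 : (0:ℝ) < 2 ^ k := by positivity
    push_cast
    rw [pow_succ]
    field_simp
  · rw [Fmap_snd]
    simp [q]

/-- harmonic identity at a midpoint, from local harmonicity only. -/
lemma mid_harm' {k : ℕ} {a b c : Fin 3} (hab : a ≠ b) (hac : a ≠ c) (hbc : b ≠ c)
    {Φ : ℝ × ℝ → ℝ} (hH : Harm (k+1) Φ (Fword [a] (q b))) :
    4 * Φ (Fword [a] (q b)) =
      Φ (Fword (a :: List.replicate k b) (q a)) +
      Φ (Fword (a :: List.replicate k b) (q c)) +
      Φ (Fword (b :: List.replicate k a) (q b)) +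
      Φ (Fword (b :: List.replicate k a) (q c)) := by
  obtain ⟨d1, d2, d3, d4, d5, d6⟩ := mid_nbrs_distinct (k := k) hab hac hbc
  obtain ⟨hsum, hcard⟩ := harm_four (nbr_mid hab hac hbc) d1 d2 d3 d4 d5 d6 (Φ := Φ)
  unfold Harm at hH
  rw [hsum, hcard] at hH
  rw [hH]
  push_cast
  ring

noncomputable def βR (k : ℕ) : ℝ := 14 * 6 ^ k / (3 ^ k + 6 * 10 ^ k)

noncomputable def γR (k : ℕ) : ℝ := (5 * 3 ^ k + 9 * 10 ^ k) / (5 * 3 ^ k + 30 * 10 ^ k)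

lemma βR_pos (k : ℕ) : 0 < βR k := by unfold βR; positivity

lemma βR_zero : βR 0 = 2 := by norm_num [βR]

lemma id1 (k : ℕ) : γR (k+1) * ((3/5 : ℝ) ^ k + βR k) = (3/5 : ℝ) ^ k := by
  unfold γR βR
  have h1 : (0:ℝ) < 3 ^ k + 6 * 10 ^ k := by positivity
  have h2 : (0:ℝ) < 5 * 3 ^ (k+1) + 30 * 10 ^ (k+1) := by positivity
  have R : (5:ℝ)^k * 6^k = 3^k * 10^k := by
    rw [← mul_pow, ← mul_pow]; norm_num
  simp only [div_pow, show (6:ℝ) = 2*3 by norm_num, show (10:ℝ) = 2*5 by norm_num, mul_pow, pow_succ] at h1 h2 ⊢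
  field_simp
  ring

lemma id2 (k : ℕ) : βR (k+1) = 2 * (3/5 : ℝ) ^ k * (1 - γR (k+1)) := by
  unfold γR βR
  have h1 : (0:ℝ) < 3 ^ (k+1) + 6 * 10 ^ (k+1) := by positivity
  have h2 : (0:ℝ) < 5 * 3 ^ (k+1) + 30 * 10 ^ (k+1) := by positivity
  have R : (5:ℝ)^k * 6^k = 3^k * 10^k := by
    rw [← mul_pow, ← mul_pow]; norm_num
  simp only [div_pow, show (6:ℝ) = 2*3 by norm_num, show (10:ℝ) = 2*5 by norm_num, mul_pow, pow_succ] at h1 h2 ⊢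
  field_simp
  ring

lemma id3 (m : ℕ) : (5/3 : ℝ) ^ m * βR m = 14 * 10 ^ m / (3 ^ m + 6 * 10 ^ m) := by
  unfold βR
  have h1 : (0:ℝ) < 3 ^ m + 6 * 10 ^ m := by positivity
  have R : (5:ℝ)^m * 6^m = 3^m * 10^m := by
    rw [← mul_pow, ← mul_pow]; norm_num
  simp only [div_pow, show (6:ℝ) = 2*3 by norm_num, show (10:ℝ) = 2*5 by norm_num, mul_pow] at h1 ⊢
  field_simp

lemma f01 : (0:Fin 3) ≠ 1 := by decide
lemma f02 : (0:Fin 3) ≠ 2 := by decide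
lemma f12 : (1:Fin 3) ≠ 2 := by decide
lemma f10 : (1:Fin 3) ≠ 0 := by decide
lemma f20 : (2:Fin 3) ≠ 0 := by decide
lemma f21 : (2:Fin 3) ≠ 1 := by decide

/-- **Dirichlet flux lemma.** -/
lemma lemB : ∀ (k : ℕ) (g : ℝ × ℝ → ℝ),
    (∀ j ≤ 2 ^ k, g (xb k j) = 0) →
    (∀ (v : List (Fin 3)) (jj : Fin 3), v.length = k → code v jj 0 ≠ 0 →
      (code v jj ≠ fun c => 2 ^ k * E3 0 c) → Harm k g (Fword v (q jj))) →
    2 * g (q 0) - nbrSum k g (q 0) = βR k * g (q 0) ∧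
    (1 ≤ k → g (Fmap 0 (q 1)) = γR k * g (q 0) ∧ g (Fmap 0 (q 2)) = γR k * g (q 0)) := by
  intro k
  induction k with
  | zero =>
      intro g hbot hharm
      have hq1 : g (q 1) = 0 := by
        have := hbot 0 (by norm_num)
        rwa [xb_zero] at this
      have hq2 : g (q 2) = 0 := by
        have h := hbot 1 (by norm_num)
        rwa [show xb 0 1 = q 2 from by simpa using xb_full 0] at h
      have hs := (corner_sum 0 f01 f02 f12 g).1
      simp only [List.replicate_zero, Fword_nil] at hs
      exact ⟨by rw [hs, hq1, hq2, βR_zero]; ring, fun h => absurd h (by omega)⟩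
  | succ k ih =>
      intro g hbot hharm
      have h2p := Nat.two_pow_pos k
      have t0 : (0:ℝ) < (3/5:ℝ) ^ k := by positivity
      have hβ := βR_pos k
      -- harmonicity of the top copy at all non-corner vertices
      have hA0 : HarmAll k (fun x => g (Fmap 0 x)) := by
        intro v j hv hnc
        subst hv
        have hglob := hharm (0 :: v) j (by simp)
          (by
            simp only [code_cons, E3_self, mul_one]
            have := Nat.two_pow_pos v.length
            omega)
          (by simpa using (noncorner_cons hnc 0) 0)
        exact Harm_copy (u := [0]) (v := v) (m := v.length + 1) (by simp; omega) hnc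
          (by rw [Fword_cons] at hglob; exact hglob)
      -- the left copy satisfies the induction hypotheses
      have hB1 : ∀ j ≤ 2 ^ k, (fun x => g (Fmap 1 x)) (xb k j) = 0 := by
        intro j hj
        simp only
        rw [Fmap1_xb]
        exact hbot j (by omega)
      have hH1 : ∀ (v : List (Fin 3)) (jj : Fin 3), v.length = k → code v jj 0 ≠ 0 →
          (code v jj ≠ fun c => 2 ^ k * E3 0 c) →
          Harm k (fun x => g (Fmap 1 x)) (Fword v (q jj)) := by
        intro v jj hv h0 htop
        subst hv
        have hnc : ∀ a : Fin 3, code v jj ≠ fun c => 2 ^ v.length * E3 a c := by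
          intro a h
          rcases fin3cases a with rfl | rfl | rfl
          · exact htop h
          · exact h0 (by rw [h]; simp [E3])
          · exact h0 (by rw [h]; simp [E3])
        have hglob := hharm (1 :: v) jj (by simp)
          (by simp only [code_cons, List.length_cons]; simp [E3]; exact h0)
          (by simpa using (noncorner_cons hnc 1) 0)
        exact Harm_copy (u := [1]) (v := v) (m := v.length + 1) (by simp; omega) hnc
          (by rw [Fword_cons] at hglob; exact hglob)
      have hB2 : ∀ j ≤ 2 ^ k, (fun x => g (Fmap 2 x)) (xb k j) = 0 := by
        intro j hj
        simp only
        rw [Fmap2_xb]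
        apply hbot
        have : (2:ℕ) ^ (k+1) = 2 ^ k + 2 ^ k := by rw [pow_succ]; ring
        omega
      have hH2 : ∀ (v : List (Fin 3)) (jj : Fin 3), v.length = k → code v jj 0 ≠ 0 →
          (code v jj ≠ fun c => 2 ^ k * E3 0 c) →
          Harm k (fun x => g (Fmap 2 x)) (Fword v (q jj)) := by
        intro v jj hv h0 htop
        subst hv
        have hnc : ∀ a : Fin 3, code v jj ≠ fun c => 2 ^ v.length * E3 a c := by
          intro a h
          rcases fin3cases a with rfl | rfl | rfl
          · exact htop h
          · exact h0 (by rw [h]; simp [E3])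
          · exact h0 (by rw [h]; simp [E3])
        have hglob := hharm (2 :: v) jj (by simp)
          (by simp only [code_cons, List.length_cons]; simp [E3]; exact h0)
          (by simpa using (noncorner_cons hnc 2) 0)
        exact Harm_copy (u := [2]) (v := v) (m := v.length + 1) (by simp; omega) hnc
          (by rw [Fword_cons] at hglob; exact hglob)
      have IH1 := (ih (fun x => g (Fmap 1 x)) hB1 hH1).1
      have IH2 := (ih (fun x => g (Fmap 2 x)) hB2 hH2).1
      rw [Fmap_q_swap 1 0] at IH1
      rw [Fmap_q_swap 2 0] at IH2
      -- harmonicity at the two glue midpoints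
      have hM1 : Harm (k+1) g (Fword [0] (q 1)) := by
        have := hharm (0 :: List.replicate k 1) 1 (by simp)
          (by simp [code_mid_cell_eval, E3])
          (nc_mid f01 0)
        rwa [← mid_eq_left] at this
      have hM2 : Harm (k+1) g (Fword [0] (q 2)) := by
        have := hharm (0 :: List.replicate k 2) 2 (by simp)
          (by simp [code_mid_cell_eval, E3])
          (nc_mid f02 0)
        rwa [← mid_eq_left] at this
      have H4t := mid_harm' f01 f02 f12 hM1
      have H4s := mid_harm' f02 f01 f21 hM2
      simp only [Fword_cons, Fword_nil] at H4t H4s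
      -- copy fluxes around the two midpoints
      have T1 := lemA k (fun x => g (Fmap 0 x)) hA0 1 0 2 f10 f12 f02
      have S1 := (corner_sum k f10 f12 f02 (fun x => g (Fmap 0 x))).1
      have SL := (corner_sum k f01 f02 f12 (fun x => g (Fmap 1 x))).1
      have T2 := lemA k (fun x => g (Fmap 0 x)) hA0 2 0 1 f20 f21 f01
      have S2 := (corner_sum k f20 f21 f01 (fun x => g (Fmap 0 x))).1
      have SR := (corner_sum k f02 f01 f21 (fun x => g (Fmap 2 x))).1
      rw [Fmap_q_self] at T1 T2
      have E1 : (3/5:ℝ) ^ k * (2 * g (Fmap 0 (q 1)) - g (q 0) - g (Fmap 0 (q 2)))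
          + βR k * g (Fmap 0 (q 1)) = 0 := by
        linear_combination (-1:ℝ) * T1 - IH1 + H4t - S1 - SL
      have E2 : (3/5:ℝ) ^ k * (2 * g (Fmap 0 (q 2)) - g (q 0) - g (Fmap 0 (q 1)))
          + βR k * g (Fmap 0 (q 2)) = 0 := by
        linear_combination (-1:ℝ) * T2 - IH2 + H4s - S2 - SR
      -- symmetry of the two midpoint values
      have hts : g (Fmap 0 (q 1)) = g (Fmap 0 (q 2)) := by
        have hz : ((3/5:ℝ) ^ k * 3 + βR k) * (g (Fmap 0 (q 1)) - g (Fmap 0 (q 2))) = 0 := by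
          linear_combination E1 - E2
        rcases mul_eq_zero.mp hz with h | h
        · exact absurd h (by positivity)
        · exact sub_eq_zero.mp h
      -- the midpoint value
      have hpos2 : (0:ℝ) < (3/5:ℝ) ^ k + βR k := by positivity
      have E1' : ((3/5:ℝ) ^ k + βR k) * g (Fmap 0 (q 1)) = (3/5:ℝ) ^ k * g (q 0) := by
        linear_combination E1 - (3/5:ℝ) ^ k * hts
      have htA : g (Fmap 0 (q 1)) = γR (k+1) * g (q 0) := by
        apply mul_left_cancel₀ (ne_of_gt hpos2)
        rw [E1']
        linear_combination (-(g (q 0))) * id1 k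
      -- the flux identity
      have hsum := (corner_sum (k+1) f01 f02 f12 g).1
      rw [List.replicate_succ] at hsum
      simp only [Fword_cons] at hsum
      have TA := lemA k (fun x => g (Fmap 0 x)) hA0 0 1 2 f01 f02 f12
      have SA := (corner_sum k f01 f02 f12 (fun x => g (Fmap 0 x))).1
      rw [Fmap_q_self] at TA
      refine ⟨?_, fun _ => ⟨htA, by rw [← hts]; exact htA⟩⟩
      rw [hsum]
      linear_combination TA + SA - g (q 0) * id2 k - 2 * (3/5:ℝ) ^ k * htA
        + (3/5:ℝ) ^ k * hts

/-- For `m ≥ 1`, let `Φ_m` vanish on the bottom row, equal `1` at `q₀`,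
and be graph-harmonic at every other vertex of `V_m`. Then the level-`m` graph normal
derivative at `q₀` equals `14·10^m/(3^m + 6·10^m)`, and the value at the two neighbors
`(q₀+q₁)/2`, `(q₀+q₂)/2` of `q₀` equals `(5·3^m + 9·10^m)/(5·3^m + 30·10^m)`. -/
theorem stmt18 (m : ℕ) (hm : 1 ≤ m) (Φ : ℝ × ℝ → ℝ)
    (hbot : ∀ j ≤ 2 ^ m, Φ (xb m j) = 0)
    (htop : Φ (q 0) = 1)
    (hharm : ∀ z ∈ V m, (¬ ∃ j ≤ 2 ^ m, z = xb m j) → z ≠ q 0 →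
      Φ z = nbrSum m Φ z / (Nat.card {y : ℝ × ℝ // Nbr m z y} : ℝ)) :
    (5 / 3 : ℝ) ^ m * (2 * Φ (q 0) - nbrSum m Φ (q 0)) =
      14 * 10 ^ m / (3 ^ m + 6 * 10 ^ m) ∧
    Φ ((2⁻¹ : ℝ) • (q 0 + q 1)) = (5 * 3 ^ m + 9 * 10 ^ m) / (5 * 3 ^ m + 30 * 10 ^ m) ∧
    Φ ((2⁻¹ : ℝ) • (q 0 + q 2)) = (5 * 3 ^ m + 9 * 10 ^ m) / (5 * 3 ^ m + 30 * 10 ^ m) := by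
  have hB := lemB m Φ hbot ?_
  · obtain ⟨hflux, hmid⟩ := hB
    obtain ⟨hm1, hm2⟩ := hmid hm
    have hp1 : (2⁻¹ : ℝ) • (q 0 + q 1) = Fmap 0 (q 1) := by
      rw [Fmap, add_comm]
    have hp2 : (2⁻¹ : ℝ) • (q 0 + q 2) = Fmap 0 (q 2) := by
      rw [Fmap, add_comm]
    refine ⟨?_, ?_, ?_⟩
    · rw [hflux, htop, mul_one, id3]
    · rw [hp1, hm1, htop, mul_one, γR]
    · rw [hp2, hm2, htop, mul_one, γR]
  · intro v jj hv h0 htop'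
    have hz : Fword v (q jj) ∈ V m := ⟨v, hv, jj, rfl⟩
    have hnb : ¬ ∃ j ≤ 2 ^ m, Fword v (q jj) = xb m j := by
      rintro ⟨j, hj, he⟩
      apply h0
      apply bottom_iff.mp
      rw [hv]
      exact ⟨j, hj, he⟩
    have hnq : Fword v (q jj) ≠ q 0 := by
      intro he
      apply htop'
      have := eq_q_iff.mp he
      rwa [hv] at this
    exact hharm _ hz hnb hnq
end SGPaper
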